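/- Let s ≥ 2 and 2 ≤ m ≤ s. Define π_{ρ,m} = ((sρ)^{m-1}/(m-1)!)/(Σ_{i=0}^{m-1} (sρ)^i/i!) and V_cr(1,m) = sup{ ρ ∈ (0,1) : sρ · π_{ρ,m} < s − m + 1 }. Then V_cr(1,m) < 1 for every m ∈ {2,...,s}. -/

import Mathlib

lemma shift_sum (a : ℝ) (n : ℕ) :
    a * ∑ i ∈ Finset.range (n+1), a^i / (Nat.factorial i : ℝ)
      = ∑ j ∈ Finset.range (n+2), (j : ℝ) * (a^j / (Nat.factorial j : ℝ)) := by
  rw [Finset.mul_sum]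
  conv_rhs => rw [Finset.sum_range_succ']
  simp only [Nat.cast_zero, zero_mul, add_zero]
  refine Finset.sum_congr rfl fun i _ => ?_
  have h : (Nat.factorial i : ℝ) ≠ 0 := Nat.cast_ne_zero.mpr (Nat.factorial_ne_zero i)
  have h2 : (Nat.factorial (i+1) : ℝ) = (i+1) * Nat.factorial i := by
    rw [Nat.factorial_succ]; push_cast; ring
  rw [h2]
  field_simp
  push_cast
  ring

lemma key_ineq (a : ℝ) (ha : 0 ≤ a) (n : ℕ) (hn : 1 ≤ n) :
    (a - n) * ∑ i ∈ Finset.range (n+1), a^i / (Nat.factorial i : ℝ)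
      < a^(n+1) / (Nat.factorial n : ℝ) := by
  have hid : a^(n+1) / (Nat.factorial n : ℝ)
      - (a - n) * ∑ i ∈ Finset.range (n+1), a^i / (Nat.factorial i : ℝ)
      = ∑ i ∈ Finset.range (n+1), ((n:ℝ) - i) * (a^i / (Nat.factorial i : ℝ)) := by
    have hfe : a^(n+1) / (Nat.factorial n : ℝ)
        = ((n:ℝ)+1) * (a^(n+1) / (Nat.factorial (n+1) : ℝ)) := by
      have h : (Nat.factorial (n+1) : ℝ) = (n+1) * Nat.factorial n := by
        rw [Nat.factorial_succ]; push_cast; ring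
      have h0 : (Nat.factorial n : ℝ) ≠ 0 := Nat.cast_ne_zero.mpr (Nat.factorial_ne_zero n)
      rw [h]; field_simp
    have hsplit : ∑ i ∈ Finset.range (n+1), ((n:ℝ) - i) * (a^i / (Nat.factorial i : ℝ))
        = (∑ i ∈ Finset.range (n+1), (n:ℝ) * (a^i / (Nat.factorial i : ℝ)))
          - ∑ i ∈ Finset.range (n+1), (i:ℝ) * (a^i / (Nat.factorial i : ℝ)) := by
      rw [← Finset.sum_sub_distrib]
      exact Finset.sum_congr rfl fun i _ => by ring
    rw [sub_mul, shift_sum,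
      Finset.sum_range_succ (fun j => (j:ℝ) * (a^j / (Nat.factorial j : ℝ))), hfe, hsplit,
      Finset.mul_sum]
    push_cast
    ring
  have hpos : 0 < ∑ i ∈ Finset.range (n+1), ((n:ℝ) - i) * (a^i / (Nat.factorial i : ℝ)) := by
    have h0 : (0:ℕ) ∈ Finset.range (n+1) := by simp
    refine Finset.sum_pos' (fun i hi => ?_) ⟨0, h0, ?_⟩
    · have hin : i ≤ n := Nat.lt_succ_iff.mp (Finset.mem_range.mp hi)
      apply mul_nonneg
      · have : (i:ℝ) ≤ n := by exact_mod_cast hin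
        linarith
      · positivity
    · simp
      exact_mod_cast hn
  linarith

noncomputable def erlangB (s : ℕ) (ρ : ℝ) (m : ℕ) : ℝ :=
  ((s * ρ) ^ (m - 1) / (Nat.factorial (m - 1) : ℝ))
    / (∑ i ∈ Finset.range m, (s * ρ) ^ i / (Nat.factorial i : ℝ))

/-- `V_cr(1,m) = sup{ρ ∈ (0,1) : sρ·π_{ρ,m} < s−m+1} < 1` for `2 ≤ m ≤ s`. -/
theorem stmt_11 (s m : ℕ) (hs : 2 ≤ s) (hm2 : 2 ≤ m) (hms : m ≤ s) :
    sSup {ρ : ℝ | ρ ∈ Set.Ioo (0 : ℝ) 1 ∧ s * ρ * erlangB s ρ m < (s : ℝ) - m + 1} < 1 := by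
  obtain ⟨n, rfl⟩ : ∃ n, m = n + 1 := ⟨m - 1, (Nat.succ_pred_eq_of_pos (by omega)).symm⟩
  have hn : 1 ≤ n := by omega
  set g : ℝ → ℝ := fun ρ => (s:ℝ) * ρ * erlangB s ρ (n+1) with hg_def
  set c : ℝ := (s:ℝ) - (n+1) + 1 with hc_def
  set D : ℝ → ℝ := fun ρ => ∑ i ∈ Finset.range (n+1), ((s:ℝ) * ρ) ^ i / (Nat.factorial i : ℝ)
    with hD_def
  have hDcont : Continuous D :=
    continuous_finset_sum _ fun i _ =>
      (((continuous_const.mul continuous_id).pow i).div_const _)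
  have hDpos : ∀ ρ : ℝ, 0 ≤ ρ → 0 < D ρ := by
    intro ρ hρ
    refine Finset.sum_pos' (fun i _ => by positivity) ⟨0, by simp, ?_⟩
    norm_num
  have hgc : ContinuousAt g 1 := by
    have hnum : Continuous fun ρ : ℝ => (s:ℝ) * ρ * (((s:ℝ) * ρ) ^ n / (Nat.factorial n : ℝ)) :=
      (continuous_const.mul continuous_id).mul
        (((continuous_const.mul continuous_id).pow n).div_const _)
    have : ContinuousAt (fun ρ : ℝ => (s:ℝ) * ρ * (((s:ℝ) * ρ) ^ n / (Nat.factorial n : ℝ)) / D ρ) 1 :=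
      hnum.continuousAt.div hDcont.continuousAt (hDpos 1 zero_le_one).ne'
    have heq : (fun ρ : ℝ => (s:ℝ) * ρ * (((s:ℝ) * ρ) ^ n / (Nat.factorial n : ℝ)) / D ρ) = g := by
      funext ρ
      simp only [hg_def, erlangB, Nat.add_sub_cancel, hD_def]
      ring
    rwa [heq] at this
  have hspos : (0:ℝ) < s := by positivity
  have hg1 : c < g 1 := by
    have hkey := key_ineq (s:ℝ) hspos.le n hn
    have hD1 : 0 < D 1 := hDpos 1 zero_le_one
    have : g 1 = (s:ℝ)^(n+1) / (Nat.factorial n : ℝ) / D 1 := by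
      simp only [hg_def, erlangB, Nat.add_sub_cancel, hD_def, mul_one]
      ring
    rw [this, hc_def, lt_div_iff₀ hD1]
    have hD1' : D 1 = ∑ i ∈ Finset.range (n+1), (s:ℝ)^i / (Nat.factorial i : ℝ) := by
      simp [hD_def]
    rw [hD1']
    push_cast at hkey ⊢
    linarith [hkey]
  have hev : ∀ᶠ ρ in nhds (1:ℝ), c < g ρ := hgc.eventually_const_lt hg1
  obtain ⟨ε, hε, hball⟩ := Metric.eventually_nhds_iff.mp hev
  refine lt_of_le_of_lt (Real.sSup_le ?_ (le_max_right (1-ε) 0))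
    (max_lt (by linarith) one_pos)
  rintro ρ ⟨⟨h0, h1⟩, hlt⟩
  refine le_trans ?_ (le_max_left _ _)
  by_contra hcon
  push_neg at hcon
  have hd : dist ρ 1 < ε := by
    rw [Real.dist_eq, abs_of_nonpos (by linarith)]
    linarith
  have h2 : (s:ℝ) - ((n:ℝ)+1) + 1 < (s:ℝ) * ρ * erlangB s ρ (n+1) := hball hd
  push_cast at hlt
  linarith
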